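/- Up to a multiplicative real constant, f = det(I_m − θ̂θ)^{-1/2} is the unique element of the Grassmann algebra Λ_{2mn} satisfying Σ_{t=1}^{m} (A²)_{lt} ∂_{θ_{jt}} f = − θ̂_{lj} f for all 1 ≤ l ≤ m and 1 ≤ j ≤ 2n. -/

import Mathlib

noncomputable section

open Matrix

/-- The standard symplectic matrix `J = [[0, Iₙ],[-Iₙ, 0]]`, with entries in `Λ`. -/
def sympJ (n : ℕ) (Λ : Type*) [Ring Λ] :
    Matrix (Fin n ⊕ Fin n) (Fin n ⊕ Fin n) Λ :=
  Matrix.fromBlocks 0 1 (-1) 0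

/-- The determinant of a square matrix over a (possibly noncommutative) ring,
via the Leibniz formula with ordered products. -/
def ncDet {m : ℕ} {Λ : Type*} [Ring Λ] (M : Matrix (Fin m) (Fin m) Λ) : Λ :=
  ∑ σ : Equiv.Perm (Fin m),
    (Equiv.Perm.sign σ : ℤ) • ((List.finRange m).map fun i => M (σ i) i).prod

/-- The binomial coefficient `binom(-1/2, k)`, the `k`-th Taylor coefficient of
`(1+x)^{-1/2}`. -/
def invSqrtCoeff (k : ℕ) : ℝ :=
  (∏ i ∈ Finset.range k, (-(1 : ℝ) / 2 - (i : ℝ))) / (Nat.factorial k)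

namespace DIS

variable {m n : ℕ} {Λ : Type*} [Ring Λ] [Algebra ℝ Λ]

def Θ (θ : Matrix (Fin n ⊕ Fin n) (Fin m) Λ) (p : (Fin n ⊕ Fin n) × Fin m) : Λ := θ p.1 p.2

def mon (θ : Matrix (Fin n ⊕ Fin n) (Fin m) Λ) (l : List ((Fin n ⊕ Fin n) × Fin m)) : Λ :=
  (l.map (Θ θ)).prod

def Vp (θ : Matrix (Fin n ⊕ Fin n) (Fin m) Λ) (p : ℕ) : Submodule ℝ Λ :=
  Submodule.span ℝ {x | ∃ l : List ((Fin n ⊕ Fin n) × Fin m), p ≤ l.length ∧ x = mon θ l}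

variable (θ : Matrix (Fin n ⊕ Fin n) (Fin m) Λ)

set_option linter.unusedSectionVars false
lemma mon_nil : mon θ [] = 1 := rfl
lemma mon_cons (a : _ × _) (l) : mon θ (a :: l) = Θ θ a * mon θ l := by
  simp [mon]
lemma mon_append (l l') : mon θ (l ++ l') = mon θ l * mon θ l' := by
  simp [mon]

variable (hodd : ∀ i j k l, θ i j * θ k l = -(θ k l * θ i j))

set_option linter.unusedSectionVars false

include hodd in
lemma theta_sq (p : (Fin n ⊕ Fin n) × Fin m) : Θ θ p * Θ θ p = 0 := by
  have h : Θ θ p * Θ θ p = -(Θ θ p * Θ θ p) := hodd p.1 p.2 p.1 p.2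
  have h2 : (2:ℝ) • (Θ θ p * Θ θ p) = 0 := by
    rw [two_smul]
    nth_rewrite 1 [h]
    exact neg_add_cancel _
  have := congrArg (fun x => (2:ℝ)⁻¹ • x) h2
  simpa [smul_smul] using this

include hodd in
lemma theta_mul_mon_mem {a : (Fin n ⊕ Fin n) × Fin m} {l : List ((Fin n ⊕ Fin n) × Fin m)} (hal : a ∈ l) :
    Θ θ a * mon θ l = 0 := by
  induction l with
  | nil => simp at hal
  | cons b t ih =>
    rcases List.mem_cons.mp hal with h | h
    · subst h
      rw [mon_cons, ← mul_assoc, theta_sq θ hodd, zero_mul]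
    · rw [mon_cons, ← mul_assoc]
      have : Θ θ a * Θ θ b = -(Θ θ b * Θ θ a) := hodd _ _ _ _
      rw [this, neg_mul, mul_assoc, ih h, mul_zero, neg_zero]

include hodd in
lemma mon_eq_zero_of_dup {l : List ((Fin n ⊕ Fin n) × Fin m)} (h : ¬ l.Nodup) :
    mon θ l = 0 := by
  induction l with
  | nil => simp at h
  | cons a t ih =>
    rw [List.nodup_cons] at h
    push_neg at h
    rw [mon_cons]
    rcases Classical.em (a ∈ t) with ha | ha
    · rw [theta_mul_mon_mem θ hodd ha]
    · rw [ih (h ha), mul_zero]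

lemma mon_mem_Vp {p : ℕ} {l : List ((Fin n ⊕ Fin n) × Fin m)} (h : p ≤ l.length) : mon θ l ∈ Vp θ p :=
  Submodule.subset_span ⟨l, h, rfl⟩

lemma Vp_antitone {p q : ℕ} (h : p ≤ q) : Vp θ q ≤ Vp θ p :=
  Submodule.span_mono (fun x ⟨l, hl, hx⟩ => ⟨l, le_trans h hl, hx⟩)

lemma Vp_mul {p q : ℕ} {x y : Λ} (hx : x ∈ Vp θ p) (hy : y ∈ Vp θ q) :
    x * y ∈ Vp θ (p + q) := by
  induction hx using Submodule.span_induction with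
  | mem x hx =>
    obtain ⟨l, hl, rfl⟩ := hx
    induction hy using Submodule.span_induction with
    | mem y hy =>
      obtain ⟨l', hl', rfl⟩ := hy
      rw [← mon_append]
      exact mon_mem_Vp θ (by simpa using Nat.add_le_add hl hl')
    | zero => rw [mul_zero]; exact zero_mem _
    | add a b _ _ ha hb => rw [mul_add]; exact add_mem ha hb
    | smul r a _ ha => rw [mul_smul_comm]; exact Submodule.smul_mem _ _ ha
  | zero => rw [zero_mul]; exact zero_mem _
  | add a b _ _ ha hb => rw [add_mul]; exact add_mem ha hb
  | smul r a _ ha => rw [smul_mul_assoc]; exact Submodule.smul_mem _ _ ha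

include hodd in
lemma Vp_zero_card {x : Λ} (hx : x ∈ Vp θ (2 * (n * m) + 1)) : x = 0 := by
  induction hx using Submodule.span_induction with
  | mem x hx =>
    obtain ⟨l, hl, rfl⟩ := hx
    apply mon_eq_zero_of_dup θ hodd
    intro hnd
    have := hnd.length_le_card
    have hcard : Fintype.card ((Fin n ⊕ Fin n) × Fin m) = 2 * (n * m) := by
      simp [Fintype.card_prod, Fintype.card_sum]; ring
    omega
  | zero => rfl
  | add a b _ _ ha hb => rw [ha, hb, add_zero]
  | smul r a _ ha => rw [ha, smul_zero]

end DIS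
namespace DIS
variable {m n : ℕ} {Λ : Type*} [Ring Λ] [Algebra ℝ Λ]
variable (θ : Matrix (Fin n ⊕ Fin n) (Fin m) Λ)

set_option linter.unusedSectionVars false

lemma mem_V0 (hgen : Algebra.adjoin ℝ
      (Set.range fun p : (Fin n ⊕ Fin n) × Fin m => θ p.1 p.2) = ⊤) (x : Λ) :
    x ∈ Vp θ 0 := by
  have hx : x ∈ Algebra.adjoin ℝ
      (Set.range fun p : (Fin n ⊕ Fin n) × Fin m => θ p.1 p.2) := by
    rw [hgen]; trivial
  induction hx using Algebra.adjoin_induction with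
  | mem y hy =>
    obtain ⟨p, rfl⟩ := hy
    have := mon_mem_Vp θ (p := 0) (l := [p]) (by simp)
    simpa [mon_cons, mon_nil, Θ] using this
  | algebraMap r =>
    have h1 : (1 : Λ) ∈ Vp θ 0 := mon_mem_Vp θ (p := 0) (l := []) (by simp)
    rw [Algebra.algebraMap_eq_smul_one]
    exact Submodule.smul_mem _ _ h1
  | add a b _ _ ha hb => exact add_mem ha hb
  | mul a b _ _ ha hb =>
    have h := Vp_mul θ ha hb
    rwa [Nat.add_zero] at h

end DIS
namespace DIS
variable {m n : ℕ} {Λ : Type*} [Ring Λ] [Algebra ℝ Λ]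
variable (θ : Matrix (Fin n ⊕ Fin n) (Fin m) Λ)
variable (D : (Fin n ⊕ Fin n) → Fin m → Module.End ℝ Λ)

set_option linter.unusedSectionVars false

def Eop : Module.End ℝ Λ :=
  ∑ p : (Fin n ⊕ Fin n) × Fin m, (LinearMap.mulLeft ℝ (θ p.1 p.2)) ∘ₗ (D p.1 p.2)

lemma Eop_apply (x : Λ) :
    Eop θ D x = ∑ p : (Fin n ⊕ Fin n) × Fin m, θ p.1 p.2 * D p.1 p.2 x := by
  simp [Eop]

lemma Eop_one (hD1 : ∀ i j, D i j 1 = 0) : Eop θ D 1 = 0 := by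
  simp [Eop_apply, hD1]

lemma Eop_algebraMap (hD1 : ∀ i j, D i j 1 = 0) (r : ℝ) :
    Eop θ D (algebraMap ℝ Λ r) = 0 := by
  rw [Algebra.algebraMap_eq_smul_one, LinearMap.map_smul, Eop_one θ D hD1, smul_zero]

variable (hodd : ∀ i j k l, θ i j * θ k l = -(θ k l * θ i j))
variable (hD1 : ∀ i j, D i j 1 = 0)
variable (hDθ : ∀ i j k l (u : Λ),
      D i j (θ k l * u) = (if k = i ∧ l = j then u else 0) - θ k l * D i j u)

include hDθ in
lemma D_pair (p q : (Fin n ⊕ Fin n) × Fin m) (u : Λ) :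
    D p.1 p.2 (Θ θ q * u) = (if q = p then u else 0) - Θ θ q * D p.1 p.2 u := by
  rw [Θ, hDθ p.1 p.2 q.1 q.2 u]
  congr 1
  simp [Prod.ext_iff]

include hodd hDθ in
lemma Eop_theta_mul (q : (Fin n ⊕ Fin n) × Fin m) (u : Λ) :
    Eop θ D (Θ θ q * u) = Θ θ q * (u + Eop θ D u) := by
  rw [Eop_apply]
  have step : ∀ p : (Fin n ⊕ Fin n) × Fin m,
      θ p.1 p.2 * D p.1 p.2 (Θ θ q * u)
      = (if q = p then θ p.1 p.2 * u else 0) + Θ θ q * (θ p.1 p.2 * D p.1 p.2 u) := by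
    intro p
    have hsw : θ p.1 p.2 * (Θ θ q * D p.1 p.2 u)
        = -(Θ θ q * (θ p.1 p.2 * D p.1 p.2 u)) := by
      rw [← mul_assoc, ← mul_assoc, Θ, hodd p.1 p.2 q.1 q.2, neg_mul]
    rw [D_pair θ D hDθ p q u, mul_sub, hsw, sub_neg_eq_add, mul_ite, mul_zero]
  rw [Finset.sum_congr rfl (fun p _ => step p), Finset.sum_add_distrib,
    Finset.sum_ite_eq, ← Finset.mul_sum, ← Eop_apply]
  simp [Θ, mul_add]

include hodd hD1 hDθ in
lemma Eop_mon_mul (l : List ((Fin n ⊕ Fin n) × Fin m)) (u : Λ) :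
    Eop θ D (mon θ l * u) = l.length • (mon θ l * u) + mon θ l * Eop θ D u := by
  induction l generalizing u with
  | nil => simp [mon_nil]
  | cons a t ih =>
    rw [mon_cons, mul_assoc, Eop_theta_mul θ D hodd hDθ a (mon θ t * u),
      mul_add, ih u, mul_add, mul_smul_comm]
    simp only [List.length_cons, succ_nsmul, mul_assoc]
    abel

include hodd hD1 hDθ in
lemma Eop_mon (l : List ((Fin n ⊕ Fin n) × Fin m)) :
    Eop θ D (mon θ l) = l.length • mon θ l := by
  have := Eop_mon_mul θ D hodd hD1 hDθ l 1
  simpa [Eop_one θ D hD1] using this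

include hodd hD1 hDθ in
lemma Eop_derivation (hgen : Algebra.adjoin ℝ
      (Set.range fun p : (Fin n ⊕ Fin n) × Fin m => θ p.1 p.2) = ⊤) (x y : Λ) :
    Eop θ D (x * y) = Eop θ D x * y + x * Eop θ D y := by
  induction mem_V0 θ hgen x using Submodule.span_induction with
  | mem a ha =>
    obtain ⟨l, _, rfl⟩ := ha
    rw [Eop_mon_mul θ D hodd hD1 hDθ l y, Eop_mon θ D hodd hD1 hDθ l, smul_mul_assoc]
  | zero => simp
  | add a b _ _ ha hb =>
    simp only [add_mul, map_add, ha, hb]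
    abel
  | smul r a _ ha =>
    simp only [smul_mul_assoc, LinearMap.map_smul, ha, smul_add]

include hodd hD1 hDθ in
lemma Eop_smul_sub_mem {p : ℕ} {x : Λ} (hx : x ∈ Vp θ p) :
    (p : ℝ) • x - Eop θ D x ∈ Vp θ (p + 1) := by
  induction hx using Submodule.span_induction with
  | mem a ha =>
    obtain ⟨l, hl, rfl⟩ := ha
    rw [Eop_mon θ D hodd hD1 hDθ l, ← Nat.cast_smul_eq_nsmul ℝ, ← sub_smul]
    rcases eq_or_lt_of_le hl with h | h
    · rw [← h]; simp
    · exact Submodule.smul_mem _ _ (mon_mem_Vp θ h)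
  | zero => simp
  | add a b _ _ ha hb =>
    rw [map_add, smul_add]
    convert add_mem ha hb using 1
    abel
  | smul r a _ ha =>
    rw [LinearMap.map_smul, smul_comm, ← smul_sub]
    exact Submodule.smul_mem _ _ ha

end DIS
namespace DIS
variable {m n : ℕ} {Λ : Type*} [Ring Λ] [Algebra ℝ Λ]
variable (θ : Matrix (Fin n ⊕ Fin n) (Fin m) Λ)

set_option linter.unusedSectionVars false

def Mmat : Matrix (Fin m) (Fin m) Λ := θᵀ * sympJ n Λ * θ
def Bmat : Matrix (Fin m) (Fin m) Λ := 1 - Mmat θ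
def Binv : Matrix (Fin m) (Fin m) Λ := ∑ k ∈ Finset.range (n * m + 1), Mmat θ ^ k

lemma J_entry (k k' : Fin n ⊕ Fin n) :
    sympJ n Λ k k' = 0 ∨ sympJ n Λ k k' = 1 ∨ sympJ n Λ k k' = -1 := by
  rcases k with k | k <;> rcases k' with k' | k'
  · left
    simp [sympJ]
  · by_cases h : k = k'
    · right; left
      simp [sympJ, Matrix.one_apply, h]
    · left
      simp [sympJ, Matrix.one_apply, h]
  · by_cases h : k = k'
    · right; right
      simp [sympJ, Matrix.neg_apply, Matrix.one_apply, h]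
    · left
      simp [sympJ, Matrix.neg_apply, Matrix.one_apply, h]
  · left
    simp [sympJ]

lemma J_commute (k k' : Fin n ⊕ Fin n) (c : Λ) : Commute (sympJ n Λ k k') c := by
  rcases J_entry (Λ := Λ) (n := n) k k' with h | h | h <;> rw [h]
  · exact Commute.zero_left c
  · exact Commute.one_left c
  · exact (Commute.one_left c).neg_left

lemma M_apply (a b : Fin m) :
    Mmat θ a b = ∑ j, ∑ k, (θ k a * sympJ n Λ k j) * θ j b := by
  simp only [Mmat, Matrix.mul_apply, Matrix.transpose_apply, Finset.sum_mul]

lemma M_entry_mem (a b : Fin m) : Mmat θ a b ∈ Vp θ 2 := by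
  rw [M_apply]
  refine Submodule.sum_mem _ fun j _ => Submodule.sum_mem _ fun k _ => ?_
  have hmon : mon θ [(k, a), (j, b)] = θ k a * θ j b := by
    simp [mon, Θ]
  rcases J_entry (Λ := Λ) (n := n) k j with h | h | h <;> rw [h]
  · rw [mul_zero, zero_mul]; exact zero_mem _
  · rw [mul_one, ← hmon]; exact mon_mem_Vp θ (by simp)
  · rw [mul_neg_one, neg_mul, ← hmon]
    exact neg_mem (mon_mem_Vp θ (by simp))

lemma M_entry_commute (hcent : ∀ i j k l (c : Λ), Commute (θ i j * θ k l) c)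
    (a b : Fin m) (c : Λ) : Commute (Mmat θ a b) c := by
  rw [M_apply]
  refine Commute.sum_left _ _ _ fun j _ => Commute.sum_left _ _ _ fun k _ => ?_
  have : (θ k a * sympJ n Λ k j) * θ j b = sympJ n Λ k j * (θ k a * θ j b) := by
    rw [← (J_commute (Λ := Λ) k j (θ k a)).eq, mul_assoc]
  rw [this]
  exact (J_commute k j c).mul_left (hcent _ _ _ _ c)

lemma Mpow_entry_mem (k : ℕ) (a b : Fin m) : (Mmat θ ^ k) a b ∈ Vp θ (2 * k) := by
  induction k generalizing a b with
  | zero =>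
    rw [pow_zero, Matrix.one_apply]
    by_cases h : a = b
    · rw [if_pos h]
      simpa [mon_nil] using mon_mem_Vp θ (p := 0) (l := []) (by simp)
    · rw [if_neg h]; exact zero_mem _
  | succ k ih =>
    rw [pow_succ, Matrix.mul_apply]
    refine Submodule.sum_mem _ fun c _ => ?_
    have := Vp_mul θ (ih a c) (M_entry_mem θ c b)
    have h2 : 2 * k + 2 = 2 * (k + 1) := by ring
    rwa [h2] at this

lemma Mpow_entry_commute (hcent : ∀ i j k l (c : Λ), Commute (θ i j * θ k l) c)
    (k : ℕ) (a b : Fin m) (c : Λ) : Commute ((Mmat θ ^ k) a b) c := by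
  induction k generalizing a b with
  | zero =>
    rw [pow_zero, Matrix.one_apply]
    by_cases h : a = b
    · rw [if_pos h]; exact Commute.one_left c
    · rw [if_neg h]; exact Commute.zero_left c
  | succ k ih =>
    rw [pow_succ, Matrix.mul_apply]
    exact Commute.sum_left _ _ _ fun d _ => (ih a d).mul_left (M_entry_commute θ hcent d b c)

lemma Binv_entry_commute (hcent : ∀ i j k l (c : Λ), Commute (θ i j * θ k l) c)
    (a b : Fin m) (c : Λ) : Commute (Binv θ a b) c := by
  rw [Binv, Matrix.sum_apply]
  exact Commute.sum_left _ _ _ fun k _ => Mpow_entry_commute θ hcent k a b c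

lemma Mpow_top (hodd : ∀ i j k l, θ i j * θ k l = -(θ k l * θ i j)) :
    Mmat θ ^ (n * m + 1) = 0 := by
  ext a b
  rw [Matrix.zero_apply]
  refine Vp_zero_card θ hodd ?_
  have := Mpow_entry_mem θ (n * m + 1) a b
  exact Vp_antitone θ (by omega) this

lemma Binv_mul_Bmat (hodd : ∀ i j k l, θ i j * θ k l = -(θ k l * θ i j)) :
    Binv θ * Bmat θ = 1 := by
  have h := geom_sum_mul (Mmat θ) (n * m + 1)
  rw [Mpow_top θ hodd] at h
  have : Binv θ * Bmat θ = -((∑ i ∈ Finset.range (n * m + 1), Mmat θ ^ i) * (Mmat θ - 1)) := by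
    rw [Bmat, Binv, ← mul_neg, neg_sub]
  rw [this, h, zero_sub, neg_neg]

lemma Bmat_mul_Binv (hodd : ∀ i j k l, θ i j * θ k l = -(θ k l * θ i j)) :
    Bmat θ * Binv θ = 1 := by
  have h := mul_geom_sum (Mmat θ) (n * m + 1)
  rw [Mpow_top θ hodd] at h
  have : Bmat θ * Binv θ = -((Mmat θ - 1) * ∑ i ∈ Finset.range (n * m + 1), Mmat θ ^ i) := by
    rw [Bmat, Binv, ← neg_mul, neg_sub]
  rw [this, h, zero_sub, neg_neg]

def Nel : Λ := Matrix.trace (Binv θ * Mmat θ)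

lemma Nel_mem : Nel θ ∈ Vp θ 2 := by
  rw [Nel, Matrix.trace]
  refine Submodule.sum_mem _ fun s _ => ?_
  rw [Matrix.diag_apply, Matrix.mul_apply]
  refine Submodule.sum_mem _ fun l _ => ?_
  have h0 : Binv θ s l ∈ Vp θ 0 := by
    rw [Binv, Matrix.sum_apply]
    exact Submodule.sum_mem _ fun k _ => Vp_antitone θ (Nat.zero_le _) (Mpow_entry_mem θ k s l)
  simpa using Vp_mul θ h0 (M_entry_mem θ l s)

lemma Nel_commute (hcent : ∀ i j k l (c : Λ), Commute (θ i j * θ k l) c) (c : Λ) :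
    Commute (Nel θ) c := by
  rw [Nel, Matrix.trace]
  refine Commute.sum_left _ _ _ fun s _ => ?_
  rw [Matrix.diag_apply, Matrix.mul_apply]
  exact Commute.sum_left _ _ _ fun l _ =>
    (Binv_entry_commute θ hcent s l c).mul_left (M_entry_commute θ hcent l s c)

end DIS
namespace DIS
variable {m n : ℕ} {Λ : Type*} [Ring Λ] [Algebra ℝ Λ]
variable (θ : Matrix (Fin n ⊕ Fin n) (Fin m) Λ)
variable (D : (Fin n ⊕ Fin n) → Fin m → Module.End ℝ Λ)

set_option linter.unusedSectionVars false

lemma D_solved (hodd : ∀ i j k l, θ i j * θ k l = -(θ k l * θ i j)) (f : Λ)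
    (hf : ∀ (l : Fin m) (j : Fin n ⊕ Fin n),
      ∑ t : Fin m, ((1 - θᵀ * sympJ n Λ * θ : Matrix (Fin m) (Fin m) Λ)) l t * D j t f
        = -((θᵀ * sympJ n Λ) l j * f))
    (j : Fin n ⊕ Fin n) (s : Fin m) :
    D j s f = -∑ l, Binv θ s l * ((θᵀ * sympJ n Λ) l j * f) := by
  have hB : ∀ l t, ((1 - θᵀ * sympJ n Λ * θ : Matrix (Fin m) (Fin m) Λ)) l t = Bmat θ l t := by
    intro l t; rw [Bmat, Mmat]
  have key : ∑ l, Binv θ s l * (∑ t, Bmat θ l t * D j t f)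
      = ∑ l, Binv θ s l * (-((θᵀ * sympJ n Λ) l j * f)) := by
    refine Finset.sum_congr rfl fun l _ => ?_
    congr 1
    rw [← hf l j]
    exact Finset.sum_congr rfl fun t _ => by rw [hB]
  have lhs : ∑ l, Binv θ s l * (∑ t, Bmat θ l t * D j t f) = D j s f := by
    have e1 : ∀ l, Binv θ s l * (∑ t, Bmat θ l t * D j t f)
        = ∑ t, (Binv θ s l * Bmat θ l t) * D j t f := by
      intro l
      rw [Finset.mul_sum]
      exact Finset.sum_congr rfl fun t _ => by rw [mul_assoc]
    rw [Finset.sum_congr rfl fun l _ => e1 l, Finset.sum_comm]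
    have e2 : ∀ t, (∑ l, (Binv θ s l * Bmat θ l t) * D j t f)
        = ((Binv θ * Bmat θ) s t) * D j t f := by
      intro t
      rw [Matrix.mul_apply, Finset.sum_mul]
    rw [Finset.sum_congr rfl fun t _ => e2 t, Binv_mul_Bmat θ hodd]
    have e3 : ∀ t : Fin m, ((1 : Matrix (Fin m) (Fin m) Λ) s t) * D j t f
        = if s = t then D j t f else 0 := by
      intro t
      rw [Matrix.one_apply]
      by_cases h : s = t
      · rw [if_pos h, if_pos h, one_mul]
      · rw [if_neg h, if_neg h, zero_mul]
    rw [Finset.sum_congr rfl fun t _ => e3 t, Finset.sum_ite_eq]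
    simp
  have rhs : ∑ l, Binv θ s l * (-((θᵀ * sympJ n Λ) l j * f))
      = -∑ l, Binv θ s l * ((θᵀ * sympJ n Λ) l j * f) := by
    rw [← Finset.sum_neg_distrib]
    exact Finset.sum_congr rfl fun l _ => by rw [mul_neg]
  rw [← lhs, key, rhs]

lemma theta_thetahat_sum (hodd : ∀ i j k l, θ i j * θ k l = -(θ k l * θ i j))
    (l : Fin m) (s : Fin m) :
    ∑ j, θ j s * (θᵀ * sympJ n Λ) l j = - Mmat θ l s := by
  have e1 : ∀ j : Fin n ⊕ Fin n, θ j s * (θᵀ * sympJ n Λ) l j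
      = ∑ k, -((θ k l * sympJ n Λ k j) * θ j s) := by
    intro j
    rw [Matrix.mul_apply, Finset.mul_sum]
    refine Finset.sum_congr rfl fun k _ => ?_
    rw [Matrix.transpose_apply]
    calc θ j s * (θ k l * sympJ n Λ k j)
        = (θ j s * θ k l) * sympJ n Λ k j := by rw [mul_assoc]
      _ = (-(θ k l * θ j s)) * sympJ n Λ k j := by rw [hodd]
      _ = -((θ k l * θ j s) * sympJ n Λ k j) := by rw [neg_mul]
      _ = -((θ k l * (θ j s * sympJ n Λ k j))) := by rw [mul_assoc]
      _ = -((θ k l * (sympJ n Λ k j * θ j s))) := by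
            rw [(J_commute (Λ := Λ) k j (θ j s)).eq]
      _ = -((θ k l * sympJ n Λ k j) * θ j s) := by rw [mul_assoc]
  rw [Finset.sum_congr rfl fun j _ => e1 j]
  rw [M_apply]
  rw [← Finset.sum_neg_distrib]
  refine Finset.sum_congr rfl fun j _ => ?_
  rw [← Finset.sum_neg_distrib]

lemma Ef_eq (hodd : ∀ i j k l, θ i j * θ k l = -(θ k l * θ i j))
    (hcent : ∀ i j k l (c : Λ), Commute (θ i j * θ k l) c) (f : Λ)
    (hf : ∀ (l : Fin m) (j : Fin n ⊕ Fin n),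
      ∑ t : Fin m, ((1 - θᵀ * sympJ n Λ * θ : Matrix (Fin m) (Fin m) Λ)) l t * D j t f
        = -((θᵀ * sympJ n Λ) l j * f)) :
    Eop θ D f = Nel θ * f := by
  rw [Eop_apply, Fintype.sum_prod_type]
  have e1 : ∀ (j : Fin n ⊕ Fin n) (s : Fin m), θ j s * D j s f
      = ∑ l, Binv θ s l * (-((θ j s * (θᵀ * sympJ n Λ) l j) * f)) := by
    intro j s
    rw [D_solved θ D hodd f hf j s, mul_neg, Finset.mul_sum]
    rw [show -∑ x : Fin m, θ j s * (Binv θ s x * ((θᵀ * sympJ n Λ) x j * f))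
        = ∑ x : Fin m, -(θ j s * (Binv θ s x * ((θᵀ * sympJ n Λ) x j * f))) by
      rw [Finset.sum_neg_distrib]]
    refine Finset.sum_congr rfl fun l _ => ?_
    calc -(θ j s * (Binv θ s l * ((θᵀ * sympJ n Λ) l j * f)))
        = -((θ j s * Binv θ s l) * ((θᵀ * sympJ n Λ) l j * f)) := by rw [mul_assoc]
      _ = -((Binv θ s l * θ j s) * ((θᵀ * sympJ n Λ) l j * f)) := by
            rw [(Binv_entry_commute θ hcent s l (θ j s)).eq]
      _ = -(Binv θ s l * (θ j s * ((θᵀ * sympJ n Λ) l j * f))) := by rw [mul_assoc]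
      _ = Binv θ s l * (-((θ j s * (θᵀ * sympJ n Λ) l j) * f)) := by
            rw [← mul_neg, ← mul_assoc]
  rw [Finset.sum_congr rfl fun j _ => Finset.sum_congr rfl fun s _ => e1 j s]
  rw [Finset.sum_comm]
  have e2 : ∀ s : Fin m, (∑ j, ∑ l, Binv θ s l * (-((θ j s * (θᵀ * sympJ n Λ) l j) * f)))
      = ∑ l, Binv θ s l * ((Mmat θ l s) * f) := by
    intro s
    rw [Finset.sum_comm]
    refine Finset.sum_congr rfl fun l _ => ?_
    rw [← Finset.mul_sum]
    congr 1
    have hterm : ∀ j : Fin n ⊕ Fin n, -((θ j s * (θᵀ * sympJ n Λ) l j) * f)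
        = (-(θ j s * (θᵀ * sympJ n Λ) l j)) * f := fun j => (neg_mul _ _).symm
    rw [Finset.sum_congr rfl fun j _ => hterm j, ← Finset.sum_mul, Finset.sum_neg_distrib,
      theta_thetahat_sum θ hodd l s, neg_neg]
  rw [Finset.sum_congr rfl fun s _ => e2 s]
  rw [Nel, Matrix.trace, Finset.sum_mul]
  refine Finset.sum_congr rfl fun s _ => ?_
  rw [Matrix.diag_apply, Matrix.mul_apply, Finset.sum_mul]
  exact Finset.sum_congr rfl fun l _ => by rw [mul_assoc]

end DIS
namespace DIS
variable {m n : ℕ} {Λ : Type*} [Ring Λ] [Algebra ℝ Λ]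
variable (θ : Matrix (Fin n ⊕ Fin n) (Fin m) Λ)

set_option linter.unusedSectionVars false

abbrev Zc (Λ : Type*) [Ring Λ] : Subring Λ := Subring.center Λ

def coeZ : Zc Λ →+* Λ := (Subring.center Λ).subtype

variable (hcent : ∀ i j k l (c : Λ), Commute (θ i j * θ k l) c)

def Mc : Matrix (Fin m) (Fin m) (Zc Λ) := fun a b =>
  ⟨Mmat θ a b, Subring.mem_center_iff.mpr fun g => ((M_entry_commute θ hcent a b g).symm).eq⟩

def Bc : Matrix (Fin m) (Fin m) (Zc Λ) := 1 - Mc θ hcent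

def Sc : Matrix (Fin m) (Fin m) (Zc Λ) := ∑ k ∈ Finset.range (n * m + 1), Mc θ hcent ^ k

lemma coeZ_injective : Function.Injective (coeZ (Λ := Λ)) := Subtype.coe_injective

lemma ncDet_map (C : Matrix (Fin m) (Fin m) (Zc Λ)) :
    ncDet (C.map (coeZ (Λ := Λ))) = coeZ C.det := by
  rw [Matrix.det_apply, ncDet, map_sum]
  refine Finset.sum_congr rfl fun σ _ => ?_
  rw [Units.smul_def, map_zsmul]
  congr 1
  rw [Fin.prod_univ_def, map_list_prod, List.map_map]
  rfl

lemma mapMatrix_Mc : (Mc θ hcent).map (coeZ (Λ := Λ)) = Mmat θ := rfl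

lemma mapMatrix_Bc : (Bc θ hcent).map (coeZ (Λ := Λ)) = Bmat θ := by
  ext a b
  simp only [Bc, Bmat, Matrix.map_apply, Matrix.sub_apply]
  rw [map_sub]
  congr 1
  rw [Matrix.one_apply, Matrix.one_apply]
  by_cases h : a = b
  · rw [if_pos h, if_pos h]
    exact _root_.map_one _
  · rw [if_neg h, if_neg h]
    exact _root_.map_zero _

lemma mapMatrix_pow (k : ℕ) :
    (Mc θ hcent ^ k).map (coeZ (Λ := Λ)) = Mmat θ ^ k := by
  have := map_pow ((coeZ (Λ := Λ)).mapMatrix) (Mc θ hcent) k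
  rw [show (coeZ (Λ := Λ)).mapMatrix (Mc θ hcent) = Mmat θ from rfl] at this
  exact this

lemma mapMatrix_Sc : (Sc θ hcent).map (coeZ (Λ := Λ)) = Binv θ := by
  have := map_sum ((coeZ (Λ := Λ)).mapMatrix) (fun k => Mc θ hcent ^ k) (Finset.range (n * m + 1))
  rw [Sc, Binv]
  rw [show ((coeZ (Λ := Λ)).mapMatrix) (∑ k ∈ Finset.range (n * m + 1), Mc θ hcent ^ k)
      = (∑ k ∈ Finset.range (n * m + 1), Mc θ hcent ^ k).map (coeZ (Λ := Λ)) from rfl] at this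
  rw [this]
  exact Finset.sum_congr rfl fun k _ => mapMatrix_pow θ hcent k

lemma Mc_pow_top (hodd : ∀ i j k l, θ i j * θ k l = -(θ k l * θ i j)) :
    Mc θ hcent ^ (n * m + 1) = 0 := by
  have h : (Mc θ hcent ^ (n * m + 1)).map (coeZ (Λ := Λ)) = (0 : Matrix (Fin m) (Fin m) Λ) := by
    rw [mapMatrix_pow θ hcent, Mpow_top θ hodd]
  ext a b
  have h2 : (Mc θ hcent ^ (n * m + 1)).map (coeZ (Λ := Λ)) a b
      = (0 : Matrix (Fin m) (Fin m) Λ) a b := by rw [h]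
  show coeZ ((Mc θ hcent ^ (n * m + 1)) a b) = coeZ ((0 : Matrix (Fin m) (Fin m) (Zc Λ)) a b)
  rw [Matrix.zero_apply, _root_.map_zero]
  simpa [Matrix.map_apply] using h2

lemma Bc_mul_Sc (hodd : ∀ i j k l, θ i j * θ k l = -(θ k l * θ i j)) :
    Bc θ hcent * Sc θ hcent = 1 := by
  have h := mul_geom_sum (Mc θ hcent) (n * m + 1)
  rw [Mc_pow_top θ hcent hodd] at h
  have e : Bc θ hcent * Sc θ hcent
      = -((Mc θ hcent - 1) * ∑ i ∈ Finset.range (n * m + 1), Mc θ hcent ^ i) := by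
    rw [Bc, Sc, ← neg_mul, neg_sub]
  rw [e, h, zero_sub, neg_neg]

lemma adjugate_Bc (hodd : ∀ i j k l, θ i j * θ k l = -(θ k l * θ i j)) :
    (Bc θ hcent).adjugate = (Bc θ hcent).det • Sc θ hcent := by
  calc (Bc θ hcent).adjugate = (Bc θ hcent).adjugate * (Bc θ hcent * Sc θ hcent) := by
        rw [Bc_mul_Sc θ hcent hodd, mul_one]
    _ = ((Bc θ hcent).adjugate * Bc θ hcent) * Sc θ hcent := by rw [mul_assoc]
    _ = ((Bc θ hcent).det • (1 : Matrix (Fin m) (Fin m) (Zc Λ))) * Sc θ hcent := by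
        rw [Matrix.adjugate_mul]
    _ = (Bc θ hcent).det • Sc θ hcent := by rw [Matrix.smul_mul, one_mul]

lemma sum_det_updateColumn (hodd : ∀ i j k l, θ i j * θ k l = -(θ k l * θ i j)) :
    ∑ i, ((Bc θ hcent).updateCol i (fun r => Mc θ hcent r i)).det
      = (Bc θ hcent).det * Matrix.trace (Sc θ hcent * Mc θ hcent) := by
  have e1 : ∀ i, ((Bc θ hcent).updateCol i (fun r => Mc θ hcent r i)).det
      = ∑ r, (Bc θ hcent).adjugate i r * Mc θ hcent r i := by
    intro i
    rw [← Matrix.cramer_apply, Matrix.cramer_eq_adjugate_mulVec]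
    rfl
  rw [Finset.sum_congr rfl fun i _ => e1 i]
  rw [adjugate_Bc θ hcent hodd]
  simp only [Matrix.trace, Matrix.diag_apply, Matrix.mul_apply, Matrix.smul_apply,
    smul_eq_mul, Finset.mul_sum, mul_assoc]

lemma Nel_eq_coe : Nel θ = coeZ (Matrix.trace (Sc θ hcent * Mc θ hcent)) := by
  rw [Nel, Matrix.trace, Matrix.trace, map_sum]
  refine Finset.sum_congr rfl fun s _ => ?_
  rw [Matrix.diag_apply, Matrix.diag_apply, Matrix.mul_apply, Matrix.mul_apply, map_sum]
  refine Finset.sum_congr rfl fun l _ => ?_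
  rw [_root_.map_mul]
  rw [show (coeZ (Λ := Λ)) (Sc θ hcent s l) = Binv θ s l by
    rw [← mapMatrix_Sc θ hcent]; rfl]
  rfl

lemma d_eq_coe : ncDet (Bmat θ) = coeZ ((Bc θ hcent).det) := by
  rw [← mapMatrix_Bc θ hcent, ncDet_map]

end DIS
namespace DIS
variable {m n : ℕ} {Λ : Type*} [Ring Λ] [Algebra ℝ Λ]
variable (θ : Matrix (Fin n ⊕ Fin n) (Fin m) Λ)
variable (D : (Fin n ⊕ Fin n) → Fin m → Module.End ℝ Λ)

set_option linter.unusedSectionVars false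

variable (hodd : ∀ i j k l, θ i j * θ k l = -(θ k l * θ i j))
variable (hcent : ∀ i j k l (c : Λ), Commute (θ i j * θ k l) c)
variable (hgen : Algebra.adjoin ℝ
      (Set.range fun p : (Fin n ⊕ Fin n) × Fin m => θ p.1 p.2) = ⊤)
variable (hD1 : ∀ i j, D i j 1 = 0)
variable (hDθ : ∀ i j k l (u : Λ),
      D i j (θ k l * u) = (if k = i ∧ l = j then u else 0) - θ k l * D i j u)

include hodd hD1 hDθ hgen in
lemma Eop_coe_prod (s : Finset (Fin m)) (g : Fin m → Zc Λ) :
    Eop θ D (coeZ (∏ i ∈ s, g i))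
      = ∑ i ∈ s, coeZ (∏ j ∈ s.erase i, g j) * Eop θ D (coeZ (g i)) := by
  classical
  induction s using Finset.induction_on with
  | empty => simp [Eop_one θ D hD1]
  | insert a s ha ih =>
    rw [Finset.prod_insert ha, _root_.map_mul,
      Eop_derivation θ D hodd hD1 hDθ hgen (coeZ (g a)) (coeZ (∏ i ∈ s, g i)), ih,
      Finset.sum_insert ha, Finset.erase_insert ha]
    have hc : Eop θ D (coeZ (g a)) * coeZ (∏ i ∈ s, g i)
        = coeZ (∏ i ∈ s, g i) * Eop θ D (coeZ (g a)) :=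
      Subring.mem_center_iff.mp (∏ i ∈ s, g i).2 _
    rw [hc, Finset.mul_sum]
    congr 1
    refine Finset.sum_congr rfl fun i hi => ?_
    have hne : i ≠ a := fun h => ha (h ▸ hi)
    rw [Finset.erase_insert_of_ne hne.symm, Finset.prod_insert (fun h => ha (Finset.mem_of_mem_erase h)),
      _root_.map_mul, mul_assoc]

include hodd hD1 hDθ in
lemma Eop_theta (q : (Fin n ⊕ Fin n) × Fin m) : Eop θ D (Θ θ q) = Θ θ q := by
  have := Eop_theta_mul θ D hodd hDθ q 1
  rw [mul_one] at this
  rw [this, Eop_one θ D hD1, add_zero, mul_one]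

include hodd hD1 hDθ in
lemma Eop_theta_theta (p q : (Fin n ⊕ Fin n) × Fin m) :
    Eop θ D (Θ θ p * Θ θ q) = Θ θ p * Θ θ q + Θ θ p * Θ θ q := by
  rw [Eop_theta_mul θ D hodd hDθ p (Θ θ q), Eop_theta θ D hodd hD1 hDθ q, mul_add]

include hodd hD1 hDθ in
lemma Eop_M_entry (a b : Fin m) :
    Eop θ D (Mmat θ a b) = Mmat θ a b + Mmat θ a b := by
  rw [M_apply]
  rw [map_sum, ← Finset.sum_add_distrib]
  refine Finset.sum_congr rfl fun j _ => ?_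
  rw [map_sum, ← Finset.sum_add_distrib]
  refine Finset.sum_congr rfl fun k _ => ?_
  rcases J_entry (Λ := Λ) (n := n) k j with h | h | h <;> rw [h]
  · rw [mul_zero, zero_mul, map_zero, add_zero]
  · rw [mul_one]
    have h2 := Eop_theta_theta θ D hodd hD1 hDθ (k, a) (j, b)
    simpa only [Θ] using h2
  · rw [mul_neg_one, neg_mul, map_neg]
    have h2 := Eop_theta_theta θ D hodd hD1 hDθ (k, a) (j, b)
    simp only [Θ] at h2
    rw [h2, neg_add]

include hodd hD1 hDθ in
lemma Eop_coe_Bc_entry (r i : Fin m) :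
    Eop θ D (coeZ (Bc θ hcent r i)) = -(Mmat θ r i + Mmat θ r i) := by
  have hsplit : coeZ (Bc θ hcent r i)
      = coeZ ((1 : Matrix (Fin m) (Fin m) (Zc Λ)) r i) - Mmat θ r i := by
    rw [Bc, Matrix.sub_apply, map_sub]; rfl
  rw [hsplit, map_sub, Eop_M_entry θ D hodd hD1 hDθ r i]
  have h1 : Eop θ D (coeZ ((1 : Matrix (Fin m) (Fin m) (Zc Λ)) r i)) = 0 := by
    rw [Matrix.one_apply]
    by_cases h : r = i
    · rw [if_pos h, _root_.map_one, Eop_one θ D hD1]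
    · rw [if_neg h, _root_.map_zero, map_zero]
  rw [h1, zero_sub]

lemma coe_det_expand (C : Matrix (Fin m) (Fin m) (Zc Λ)) :
    ∑ σ : Equiv.Perm (Fin m), (Equiv.Perm.sign σ : ℤ) • coeZ (∏ i, C (σ i) i)
      = coeZ C.det := by
  rw [Matrix.det_apply, map_sum]
  exact Finset.sum_congr rfl fun σ _ => by rw [Units.smul_def, map_zsmul]

include hodd hcent hD1 hDθ hgen in
lemma Eop_d :
    Eop θ D (ncDet (Bmat θ)) =
      -(ncDet (Bmat θ) * Nel θ + ncDet (Bmat θ) * Nel θ) := by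
  classical
  have expand : ncDet (Bmat θ)
      = ∑ σ : Equiv.Perm (Fin m), (Equiv.Perm.sign σ : ℤ) • coeZ (∏ i, Bc θ hcent (σ i) i) := by
    rw [d_eq_coe θ hcent]
    exact (coe_det_expand _).symm
  have key : ∀ σ : Equiv.Perm (Fin m),
      Eop θ D (coeZ (∏ i, Bc θ hcent (σ i) i))
      = -((∑ i, coeZ (∏ j, ((Bc θ hcent).updateCol i fun r => Mc θ hcent r i) (σ j) j))
        + (∑ i, coeZ (∏ j, ((Bc θ hcent).updateCol i fun r => Mc θ hcent r i) (σ j) j))) := by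
    intro σ
    rw [Eop_coe_prod θ D hodd hgen hD1 hDθ Finset.univ (fun i => Bc θ hcent (σ i) i)]
    rw [← Finset.sum_add_distrib, ← Finset.sum_neg_distrib]
    refine Finset.sum_congr rfl fun i _ => ?_
    rw [Eop_coe_Bc_entry θ D hodd hcent hD1 hDθ (σ i) i]
    have hupd : (∏ j, ((Bc θ hcent).updateCol i fun r => Mc θ hcent r i) (σ j) j)
        = (∏ j ∈ Finset.univ.erase i, Bc θ hcent (σ j) j) * Mc θ hcent (σ i) i := by
      rw [← Finset.mul_prod_erase Finset.univ _ (Finset.mem_univ i)]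
      rw [Matrix.updateCol_apply, if_pos rfl, mul_comm]
      congr 1
      refine Finset.prod_congr rfl fun j hj => ?_
      rw [Matrix.updateCol_apply, if_neg (Finset.ne_of_mem_erase hj)]
    rw [hupd, _root_.map_mul, mul_neg, mul_add]
    rfl
  rw [expand, map_sum]
  have step : ∀ σ : Equiv.Perm (Fin m),
      Eop θ D ((Equiv.Perm.sign σ : ℤ) • coeZ (∏ i, Bc θ hcent (σ i) i))
      = (Equiv.Perm.sign σ : ℤ) • Eop θ D (coeZ (∏ i, Bc θ hcent (σ i) i)) :=
    fun σ => map_zsmul (Eop θ D) _ _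
  rw [Finset.sum_congr rfl fun σ _ => (step σ).trans (by rw [key σ])]
  have swap : ∀ F : Equiv.Perm (Fin m) → Fin m → Λ,
      ∑ σ : Equiv.Perm (Fin m), (Equiv.Perm.sign σ : ℤ) • (-((∑ i, F σ i) + ∑ i, F σ i))
      = -((∑ σ : Equiv.Perm (Fin m), ∑ i, (Equiv.Perm.sign σ : ℤ) • F σ i)
        + ∑ σ : Equiv.Perm (Fin m), ∑ i, (Equiv.Perm.sign σ : ℤ) • F σ i) := by
    intro F
    rw [← Finset.sum_add_distrib, ← Finset.sum_neg_distrib]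
    refine Finset.sum_congr rfl fun σ _ => ?_
    rw [smul_neg, smul_add, Finset.smul_sum]
  rw [swap]
  have inner : ∑ σ : Equiv.Perm (Fin m), ∑ i : Fin m,
      (Equiv.Perm.sign σ : ℤ) • coeZ (∏ j, ((Bc θ hcent).updateCol i fun r => Mc θ hcent r i) (σ j) j)
      = ncDet (Bmat θ) * Nel θ := by
    rw [Finset.sum_comm]
    have e : ∀ i : Fin m, ∑ σ : Equiv.Perm (Fin m),
        (Equiv.Perm.sign σ : ℤ) • coeZ (∏ j, ((Bc θ hcent).updateCol i fun r => Mc θ hcent r i) (σ j) j)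
        = coeZ (((Bc θ hcent).updateCol i fun r => Mc θ hcent r i).det) :=
      fun i => coe_det_expand _
    rw [Finset.sum_congr rfl fun i _ => e i, ← map_sum,
      sum_det_updateColumn θ hcent hodd, _root_.map_mul, ← d_eq_coe θ hcent,
      ← Nel_eq_coe θ hcent]
  rw [inner, ← expand]

end DIS
namespace DIS
variable {m n : ℕ} {Λ : Type*} [Ring Λ] [Algebra ℝ Λ]
variable (θ : Matrix (Fin n ⊕ Fin n) (Fin m) Λ)
variable (D : (Fin n ⊕ Fin n) → Fin m → Module.End ℝ Λ)

set_option linter.unusedSectionVars false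

variable (hodd : ∀ i j k l, θ i j * θ k l = -(θ k l * θ i j))
variable (hcent : ∀ i j k l (c : Λ), Commute (θ i j * θ k l) c)
variable (hgen : Algebra.adjoin ℝ
      (Set.range fun p : (Fin n ⊕ Fin n) × Fin m => θ p.1 p.2) = ⊤)
variable (hD1 : ∀ i j, D i j 1 = 0)
variable (hDθ : ∀ i j k l (u : Λ),
      D i j (θ k l * u) = (if k = i ∧ l = j then u else 0) - θ k l * D i j u)

include hcent in
lemma d_commute (c : Λ) : Commute (ncDet (Bmat θ)) c := by
  rw [d_eq_coe θ hcent]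
  exact (Subring.mem_center_iff.mp ((Bc θ hcent).det).2 c).symm

include hgen in
lemma prod_approx (s : Finset (Fin m)) (gZ : Fin m → Zc Λ) (gR : Fin m → ℝ)
    (h : ∀ i ∈ s, (coeZ (gZ i) : Λ) - gR i • (1 : Λ) ∈ Vp θ 2) :
    coeZ (∏ i ∈ s, gZ i) - (∏ i ∈ s, gR i) • (1 : Λ) ∈ Vp θ 2 := by
  classical
  induction s using Finset.induction_on with
  | empty => simp
  | insert a s ha ih =>
    rw [Finset.prod_insert ha, Finset.prod_insert ha, _root_.map_mul]
    have key : coeZ (gZ a) * coeZ (∏ i ∈ s, gZ i) - (gR a * ∏ i ∈ s, gR i) • (1 : Λ)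
        = coeZ (gZ a) * (coeZ (∏ i ∈ s, gZ i) - (∏ i ∈ s, gR i) • (1 : Λ))
          + (∏ i ∈ s, gR i) • ((coeZ (gZ a) : Λ) - gR a • (1 : Λ)) := by
      rw [mul_sub, smul_sub, smul_smul, mul_comm (gR a) (∏ i ∈ s, gR i)]
      rw [mul_smul_comm, mul_one]
      abel
    rw [key]
    refine add_mem ?_ (Submodule.smul_mem _ _ (h a (Finset.mem_insert_self a s)))
    have h0 : (coeZ (gZ a) : Λ) ∈ Vp θ 0 := mem_V0 θ hgen _
    have := Vp_mul θ h0 (ih fun i hi => h i (Finset.mem_insert_of_mem hi))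
    simpa using this

include hgen hcent in
lemma d_sub_one_mem : ncDet (Bmat θ) - 1 ∈ Vp θ 2 := by
  classical
  have expand : ncDet (Bmat θ)
      = ∑ σ : Equiv.Perm (Fin m), (Equiv.Perm.sign σ : ℤ) • coeZ (∏ i, Bc θ hcent (σ i) i) := by
    rw [d_eq_coe θ hcent]
    exact (coe_det_expand _).symm
  have hone : (1 : Λ)
      = ∑ σ : Equiv.Perm (Fin m), (Equiv.Perm.sign σ : ℤ) •
          ((∏ i, (1 : Matrix (Fin m) (Fin m) ℝ) (σ i) i) • (1 : Λ)) := by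
    have hdet : ∑ σ : Equiv.Perm (Fin m), (Equiv.Perm.sign σ : ℤ) •
        (∏ i, (1 : Matrix (Fin m) (Fin m) ℝ) (σ i) i) = (1 : ℝ) := by
      rw [show (1 : ℝ) = Matrix.det (1 : Matrix (Fin m) (Fin m) ℝ) from (Matrix.det_one).symm,
        Matrix.det_apply]
      exact Finset.sum_congr rfl fun σ _ => by rw [Units.smul_def]
    calc (1 : Λ) = (1 : ℝ) • (1 : Λ) := by rw [one_smul]
      _ = (∑ σ : Equiv.Perm (Fin m), (Equiv.Perm.sign σ : ℤ) •
          (∏ i, (1 : Matrix (Fin m) (Fin m) ℝ) (σ i) i)) • (1 : Λ) := by rw [hdet]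
      _ = _ := by
          rw [Finset.sum_smul]
          exact Finset.sum_congr rfl fun σ _ => by rw [smul_assoc]
  rw [expand]
  nth_rewrite 1 [hone]
  rw [← Finset.sum_sub_distrib]
  refine Submodule.sum_mem _ fun σ _ => ?_
  rw [← smul_sub]
  have hmem : coeZ (∏ i, Bc θ hcent (σ i) i)
      - (∏ i, (1 : Matrix (Fin m) (Fin m) ℝ) (σ i) i) • (1 : Λ) ∈ Vp θ 2 := by
    refine prod_approx θ hgen Finset.univ _ _ fun i _ => ?_
    have hB : (coeZ (Bc θ hcent (σ i) i) : Λ)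
        = (if σ i = i then (1 : Λ) else 0) - Mmat θ (σ i) i := by
      rw [Bc, Matrix.sub_apply, map_sub]
      congr 1
      rw [Matrix.one_apply]
      by_cases h : σ i = i
      · rw [if_pos h, if_pos h, _root_.map_one]
      · rw [if_neg h, if_neg h, _root_.map_zero]
    rw [hB, Matrix.one_apply]
    by_cases h : σ i = i
    · rw [if_pos h, if_pos h, one_smul, sub_sub_cancel_left]
      exact neg_mem (M_entry_mem θ (σ i) i)
    · rw [if_neg h, if_neg h, zero_smul, sub_zero, zero_sub]
      exact neg_mem (M_entry_mem θ (σ i) i)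
  have : ((Equiv.Perm.sign σ : ℤ) : ℝ) • (coeZ (∏ i, Bc θ hcent (σ i) i)
      - (∏ i, (1 : Matrix (Fin m) (Fin m) ℝ) (σ i) i) • (1 : Λ)) ∈ Vp θ 2 :=
    Submodule.smul_mem _ _ hmem
  rwa [Int.cast_smul_eq_zsmul] at this

lemma x_pow_mem (k : ℕ) (hx : ncDet (Bmat θ) - 1 ∈ Vp θ 2) :
    (ncDet (Bmat θ) - 1) ^ k ∈ Vp θ (2 * k) := by
  induction k with
  | zero =>
    rw [pow_zero]
    simpa [mon_nil] using mon_mem_Vp θ (p := 0) (l := []) (by simp)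
  | succ k ih =>
    rw [pow_succ]
    have := Vp_mul θ ih hx
    have h2 : 2 * k + 2 = 2 * (k + 1) := by ring
    rwa [h2] at this

lemma invSqrtCoeff_zero : invSqrtCoeff 0 = 1 := by
  simp [invSqrtCoeff]

lemma invSqrtCoeff_rec (k : ℕ) :
    (2 * ((k : ℝ) + 1)) * invSqrtCoeff (k + 1) = -(2 * (k : ℝ) + 1) * invSqrtCoeff k := by
  rw [invSqrtCoeff, invSqrtCoeff, Finset.prod_range_succ, Nat.factorial_succ]
  have hk : ((Nat.factorial k : ℝ)) ≠ 0 := Nat.cast_ne_zero.mpr (Nat.factorial_ne_zero k)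
  have hk1 : ((k : ℝ) + 1) ≠ 0 := by positivity
  push_cast
  field_simp
  ring

end DIS
namespace DIS
variable {m n : ℕ} {Λ : Type*} [Ring Λ] [Algebra ℝ Λ]
variable (θ : Matrix (Fin n ⊕ Fin n) (Fin m) Λ)
variable (D : (Fin n ⊕ Fin n) → Fin m → Module.End ℝ Λ)

set_option linter.unusedSectionVars false

variable (hodd : ∀ i j k l, θ i j * θ k l = -(θ k l * θ i j))
variable (hcent : ∀ i j k l (c : Λ), Commute (θ i j * θ k l) c)
variable (hgen : Algebra.adjoin ℝ
      (Set.range fun p : (Fin n ⊕ Fin n) × Fin m => θ p.1 p.2) = ⊤)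
variable (hD1 : ∀ i j, D i j 1 = 0)
variable (hDθ : ∀ i j k l (u : Λ),
      D i j (θ k l * u) = (if k = i ∧ l = j then u else 0) - θ k l * D i j u)

include hodd hcent hgen hD1 hDθ in
lemma Eop_g :
    Eop θ D (∑ k ∈ Finset.range (n * m + 1),
        invSqrtCoeff k • (ncDet (Bmat θ) - 1) ^ k)
      = Nel θ * ∑ k ∈ Finset.range (n * m + 1),
        invSqrtCoeff k • (ncDet (Bmat θ) - 1) ^ k := by
  classical
  set d : Λ := ncDet (Bmat θ) with hd
  set x : Λ := d - 1 with hxdef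
  set T : Λ := Nel θ with hT
  set K : ℕ := n * m with hK
  have hxcom : ∀ c : Λ, Commute x c := fun c =>
    (d_commute θ hcent c).sub_left (Commute.one_left c)
  have hTcom : ∀ c : Λ, Commute T c := fun c => Nel_commute θ hcent c
  have hEx : Eop θ D x = (-2 : ℝ) • (T * (1 + x)) := by
    have e1 : Eop θ D x = Eop θ D d := by
      rw [hxdef, map_sub, Eop_one θ D hD1, sub_zero]
    have e2 : Eop θ D d = -(d * T + d * T) :=
      Eop_d θ D hodd hcent hgen hD1 hDθ
    have e3 : d * T = T * d := ((hTcom d).symm).eq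
    have e4 : (1 : Λ) + x = d := by rw [hxdef]; abel
    rw [e1, e2, e3, e4, ← two_smul ℝ (T * d), ← neg_smul]
  have hterm : ∀ k : ℕ, Eop θ D x * x ^ k = (-2 : ℝ) • (T * x ^ k + T * x ^ (k + 1)) := by
    intro k
    rw [hEx, smul_mul_assoc]
    congr 1
    rw [mul_assoc, add_mul, one_mul, ← pow_succ', mul_add]
  have Epow : ∀ k : ℕ, Eop θ D (x ^ (k + 1)) = (k + 1) • (Eop θ D x * x ^ k) := by
    intro k
    induction k with
    | zero => simp
    | succ k ih =>
      have hsplit : x ^ (k + 2) = x * x ^ (k + 1) := by rw [← pow_succ']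
      have hx2 : x * (Eop θ D x * x ^ k) = Eop θ D x * x ^ (k + 1) := by
        rw [(hxcom (Eop θ D x * x ^ k)).eq, mul_assoc, ← pow_succ]
      rw [hsplit, Eop_derivation θ D hodd hD1 hDθ hgen x (x ^ (k + 1)), ih,
        mul_smul_comm, hx2]
      simp only [succ_nsmul]
      abel
  have hTxK : T * x ^ K = 0 := by
    have h1 : x ∈ Vp θ 2 := by
      rw [hxdef, hd]
      exact d_sub_one_mem θ hcent hgen
    have h2 : x ^ K ∈ Vp θ (2 * K) := by
      have := x_pow_mem θ K (by rw [← hd, ← hxdef]; exact h1)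
      rwa [← hd, ← hxdef] at this
    have h3 := Vp_mul θ (Nel_mem θ) h2
    exact Vp_zero_card θ hodd (Vp_antitone θ (by omega) h3)
  have hmap : Eop θ D (∑ k ∈ Finset.range (K + 1), invSqrtCoeff k • x ^ k)
      = ∑ k ∈ Finset.range (K + 1), invSqrtCoeff k • Eop θ D (x ^ k) := by
    rw [map_sum]
    exact Finset.sum_congr rfl fun k _ => LinearMap.map_smul _ _ _
  rw [hmap, Finset.sum_range_succ' (fun k => invSqrtCoeff k • Eop θ D (x ^ k)) K]
  rw [pow_zero, Eop_one θ D hD1, smul_zero, add_zero]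
  have step1 : ∀ k : ℕ, invSqrtCoeff (k + 1) • Eop θ D (x ^ (k + 1))
      = ((2 * (k : ℝ) + 1) * invSqrtCoeff k) • (T * x ^ k)
        + ((2 * (k : ℝ) + 1) * invSqrtCoeff k) • (T * x ^ (k + 1)) := by
    intro k
    rw [Epow k, hterm k, ← Nat.cast_smul_eq_nsmul ℝ (k + 1), smul_smul, smul_smul]
    have hco : invSqrtCoeff (k + 1) * ((k + 1 : ℕ) : ℝ) * (-2)
        = (2 * (k : ℝ) + 1) * invSqrtCoeff k := by
      push_cast
      linear_combination (-1 : ℝ) * invSqrtCoeff_rec k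
    rw [hco, smul_add]
  rw [Finset.sum_congr rfl fun k _ => step1 k, Finset.sum_add_distrib]
  have hS1 : ∑ k ∈ Finset.range K, ((2 * (k : ℝ) + 1) * invSqrtCoeff k) • (T * x ^ k)
      = ∑ k ∈ Finset.range (K + 1), ((2 * (k : ℝ) + 1) * invSqrtCoeff k) • (T * x ^ k) := by
    rw [Finset.sum_range_succ, hTxK, smul_zero, add_zero]
  have hS2 : ∑ k ∈ Finset.range K, ((2 * (k : ℝ) + 1) * invSqrtCoeff k) • (T * x ^ (k + 1))
      = ∑ k ∈ Finset.range (K + 1), (-(2 * (k : ℝ)) * invSqrtCoeff k) • (T * x ^ k) := by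
    rw [Finset.sum_range_succ' (fun k => (-(2 * (k : ℝ)) * invSqrtCoeff k) • (T * x ^ k)) K]
    have hG0 : (-(2 * ((0 : ℕ) : ℝ)) * invSqrtCoeff 0) • (T * x ^ 0) = 0 := by
      norm_num
    rw [hG0, add_zero]
    refine Finset.sum_congr rfl fun k _ => ?_
    congr 1
    push_cast
    linear_combination invSqrtCoeff_rec k
  rw [hS1, hS2, ← Finset.sum_add_distrib]
  rw [Finset.mul_sum]
  refine Finset.sum_congr rfl fun k _ => ?_
  rw [← add_smul]
  have hcoeff : (2 * (k : ℝ) + 1) * invSqrtCoeff k + (-(2 * (k : ℝ))) * invSqrtCoeff k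
      = invSqrtCoeff k := by ring
  rw [hcoeff, mul_smul_comm]

end DIS

/-- in the Grassmann algebra `Λ_{2mn}` generated by the `θᵢⱼ`,
any solution `f` of the system `Σ_t (A²)_{lt} ∂_{θ_{jt}} f = −θ̂_{lj} f`
(for all `l, j`) is a real scalar multiple of `det(I_m − θ̂θ)^{-1/2}`; i.e. the
system determines `f = det(A)⁻¹` uniquely up to a multiplicative constant. -/
theorem det_inv_sqrt_unique (m n : ℕ) (Λ : Type*) [Ring Λ] [Algebra ℝ Λ]
    (θ : Matrix (Fin n ⊕ Fin n) (Fin m) Λ)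
    (hodd : ∀ i j k l, θ i j * θ k l = -(θ k l * θ i j))
    (hcent : ∀ i j k l (c : Λ), Commute (θ i j * θ k l) c)
    (hgen : Algebra.adjoin ℝ
      (Set.range fun p : (Fin n ⊕ Fin n) × Fin m => θ p.1 p.2) = ⊤)
    (D : (Fin n ⊕ Fin n) → Fin m → Module.End ℝ Λ)
    (hD1 : ∀ i j, D i j 1 = 0)
    (hDθ : ∀ i j k l (u : Λ),
      D i j (θ k l * u) = (if k = i ∧ l = j then u else 0) - θ k l * D i j u)
    (f : Λ)
    (hf : ∀ (l : Fin m) (j : Fin n ⊕ Fin n),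
      ∑ t : Fin m, ((1 - θᵀ * sympJ n Λ * θ : Matrix (Fin m) (Fin m) Λ)) l t * D j t f
        = -((θᵀ * sympJ n Λ) l j * f)) :
    ∃ c : ℝ, f = c • ∑ k ∈ Finset.range (n * m + 1),
      invSqrtCoeff k • (ncDet (1 - θᵀ * sympJ n Λ * θ) - 1) ^ k := by
  classical
  open DIS in
  have hBeq : (1 - θᵀ * sympJ n Λ * θ : Matrix (Fin m) (Fin m) Λ) = DIS.Bmat θ := rfl
  rw [hBeq]
  set g : Λ := ∑ k ∈ Finset.range (n * m + 1),
      invSqrtCoeff k • (ncDet (DIS.Bmat θ) - 1) ^ k with hg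
  -- decompose f into a scalar part plus V₁
  have hf0 : f ∈ DIS.Vp θ 0 := DIS.mem_V0 θ hgen f
  have hsub : DIS.Vp θ 0 ≤ (Submodule.span ℝ {(1 : Λ)}) ⊔ DIS.Vp θ 1 := by
    rw [DIS.Vp]
    apply Submodule.span_le.mpr
    rintro y ⟨l, -, rfl⟩
    cases l with
    | nil =>
      rw [DIS.mon_nil]
      exact Submodule.mem_sup_left (Submodule.mem_span_singleton_self _)
    | cons a t =>
      exact Submodule.mem_sup_right (DIS.mon_mem_Vp θ (by simp))
  obtain ⟨y, hy, z, hz, hyz⟩ := Submodule.mem_sup.mp (hsub hf0)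
  obtain ⟨c, rfl⟩ := Submodule.mem_span_singleton.mp hy
  refine ⟨c, ?_⟩
  -- the explicit solution minus its constant term lies in V₁
  have hgw : g - 1 ∈ DIS.Vp θ 1 := by
    have hpeel : g = (∑ k ∈ Finset.range (n * m),
        invSqrtCoeff (k + 1) • (ncDet (DIS.Bmat θ) - 1) ^ (k + 1)) + 1 := by
      rw [hg, Finset.sum_range_succ'
        (fun k => invSqrtCoeff k • (ncDet (DIS.Bmat θ) - 1) ^ k) (n * m)]
      rw [pow_zero, DIS.invSqrtCoeff_zero, one_smul]
    rw [hpeel, add_sub_cancel_right]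
    refine Submodule.sum_mem _ fun k _ => Submodule.smul_mem _ _ ?_
    have := DIS.x_pow_mem θ (k + 1) (DIS.d_sub_one_mem θ hcent hgen)
    exact DIS.Vp_antitone θ (by omega) this
  -- h := f - c • g
  set h : Λ := (c • (1 : Λ) + z) - c • g with hh
  have hmem1 : h ∈ DIS.Vp θ 1 := by
    have hrw : h = z - c • (g - 1) := by
      rw [hh, smul_sub]
      abel
    rw [hrw]
    exact sub_mem hz (Submodule.smul_mem _ _ hgw)
  have hEf : DIS.Eop θ D (c • (1 : Λ) + z) = DIS.Nel θ * (c • (1 : Λ) + z) := by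
    rw [← hyz] at hf
    exact DIS.Ef_eq θ D hodd hcent _ hf
  have hEg : DIS.Eop θ D g = DIS.Nel θ * g :=
    DIS.Eop_g θ D hodd hcent hgen hD1 hDθ
  have hEh : DIS.Eop θ D h = DIS.Nel θ * h := by
    rw [hh, map_sub, LinearMap.map_smul, hEf, hEg, mul_sub, mul_smul_comm]
  have climb : ∀ q : ℕ, h ∈ DIS.Vp θ (q + 1) := by
    intro q
    induction q with
    | zero => exact hmem1
    | succ q ih =>
      have h1 : ((q + 1 : ℕ) : ℝ) • h - DIS.Eop θ D h ∈ DIS.Vp θ (q + 1 + 1) :=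
        DIS.Eop_smul_sub_mem θ D hodd hD1 hDθ ih
      have h2 : DIS.Eop θ D h ∈ DIS.Vp θ (q + 1 + 1) := by
        rw [hEh]
        have := DIS.Vp_mul θ (DIS.Nel_mem θ) ih
        exact DIS.Vp_antitone θ (by omega) this
      have h3 : ((q + 1 : ℕ) : ℝ) • h ∈ DIS.Vp θ (q + 1 + 1) := by
        have := add_mem h1 h2
        rwa [sub_add_cancel] at this
      have h4 := Submodule.smul_mem (DIS.Vp θ (q + 1 + 1)) (((q + 1 : ℕ) : ℝ))⁻¹ h3
      rwa [smul_smul, inv_mul_cancel₀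
        (Nat.cast_ne_zero.mpr (Nat.succ_ne_zero q)), one_smul] at h4
  have hzero : h = 0 := by
    refine DIS.Vp_zero_card θ hodd ?_
    have := climb (2 * (n * m))
    exact this
  have hsubz : (c • (1 : Λ) + z) - c • g = 0 := by rw [← hh]; exact hzero
  rw [← hyz]
  exact sub_eq_zero.mp hsubz
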